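/- Let U be a Hausdorff locally convex ordered topological vector space, K₀ ⊆ U a convex cone, and C a convex cone containing -U₊ with C ⊆ U. Then the following are equivalent: (i) the closure of C intersects U₊ only in {0}; (ii) for each x ∈ U₊ \ {0} there exists a positive continuous linear functional x' with x'(y) ≤ 0 for all y ∈ C and x'(x) > 0. -/

import Mathlib

/-- Abstract fundamental theorem of asset pricing on locally convex spaces: for a convex
cone `C` containing `-U₊`, the "no free lunch" condition `cl(C) ∩ U₊ = {0}` holds if and
only if for each `x ∈ U₊ \ {0}` there exists a positive continuous linear functional `x'`
with `x' ≤ 0` on `C` and `x'(x) > 0`. -/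
theorem abstract_FTAP_locally_convex {U : Type*} [AddCommGroup U] [PartialOrder U]
    [CovariantClass U U (· + ·) (· ≤ ·)] [Module ℝ U]
    [TopologicalSpace U] [IsTopologicalAddGroup U] [ContinuousSMul ℝ U]
    [LocallyConvexSpace ℝ U] [T2Space U]
    (hclosedCone : IsClosed {x : U | 0 ≤ x})
    (C : Set U) (hCconv : Convex ℝ C)
    (hCcone : ∀ t : ℝ, 0 ≤ t → ∀ y ∈ C, t • y ∈ C)
    (hneg : ∀ z : U, 0 ≤ z → -z ∈ C) :
    (closure C ∩ {x : U | 0 ≤ x} = {0}) ↔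
      ∀ x : U, 0 ≤ x → x ≠ 0 → ∃ x' : U →L[ℝ] ℝ,
        (∀ z : U, 0 ≤ z → 0 ≤ x' z) ∧ (∀ y ∈ C, x' y ≤ 0) ∧ 0 < x' x := by
  have h0C : (0:U) ∈ C := by simpa using hneg 0 le_rfl
  constructor
  · intro h x hx hx0
    have hxnot : x ∉ closure C := by
      intro hxc
      exact hx0 (by
        have : x ∈ closure C ∩ {x : U | 0 ≤ x} := ⟨hxc, hx⟩
        rw [h] at this; exact this)
    obtain ⟨f, u, hfu, hux⟩ := geometric_hahn_banach_closed_point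
      hCconv.closure isClosed_closure hxnot
    have hu0 : 0 < u := by simpa using hfu 0 (subset_closure h0C)
    have hfle : ∀ y ∈ C, f y ≤ 0 := by
      intro y hy
      by_contra hpos
      push_neg at hpos
      have ht : ∀ t : ℝ, 0 ≤ t → t * f y < u := by
        intro t htt
        have := hfu (t • y) (subset_closure (hCcone t htt y hy))
        simpa using this
      have := ht ((u + 1) / f y) (by positivity)
      rw [div_mul_cancel₀ _ (ne_of_gt hpos)] at this
      linarith
    refine ⟨f, ?_, hfle, by linarith⟩
    intro z hz
    have := hfle (-z) (hneg z hz)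
    simpa using this
  · intro h
    ext x
    simp only [Set.mem_inter_iff, Set.mem_setOf_eq, Set.mem_singleton_iff]
    constructor
    · rintro ⟨hxc, hxp⟩
      by_contra hx0
      obtain ⟨f, _, hfC, hfx⟩ := h x hxp hx0
      have hcl : closure C ⊆ {y | f y ≤ 0} :=
        closure_minimal hfC (isClosed_le f.continuous continuous_const)
      exact absurd hfx (not_lt.2 (hcl hxc))
    · rintro rfl
      exact ⟨subset_closure h0C, le_rfl⟩
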